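/- Let n ≥ 2 and 1 ≤ m ≤ N be natural numbers, and let U₁, …, Uₙ be independent random subsets of {1, …, N}, each uniformly distributed on the family of all subsets of {1, …, N} of cardinality m. Let E be the event that for every i, the set U_i contains at least one element not belonging to any U_j with j ≠ i. Then P(E) ≥ 1 − n · C((n−1)m, m) / C(N, m), where C(·,·) denotes the binomial coefficient. -/

import Mathlib

open MeasureTheory ProbabilityTheory

/-- Let `n ≥ 2`, `1 ≤ m ≤ N`, and let `U₁, …, Uₙ` be independent random subsets of
`{1, …, N}`, each uniform on the `m`-element subsets. Let `E` be the event that every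
`Uᵢ` contains an element belonging to no `Uⱼ` with `j ≠ i`. Then
`P(E) ≥ 1 - n * C((n-1)m, m) / C(N, m)`. -/
theorem prob_private_element (n m N : ℕ) (hn : 2 ≤ n) (hm : 1 ≤ m) (hmN : m ≤ N)
    {Ω : Type*} [MeasurableSpace Ω] (μ : Measure Ω) [IsProbabilityMeasure μ]
    (U : Fin n → Ω → Finset ℕ)
    (hindep : iIndepFun (m := fun _ => (⊤ : MeasurableSpace (Finset ℕ))) U μ)
    (hrange : ∀ i ω, U i ω ⊆ Finset.Icc 1 N ∧ (U i ω).card = m)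
    (hunif : ∀ i, ∀ S : Finset ℕ, S ⊆ Finset.Icc 1 N → S.card = m →
      μ {ω | U i ω = S} = 1 / (Nat.choose N m : ENNReal)) :
    1 - (n : ENNReal) * (Nat.choose ((n - 1) * m) m : ENNReal) /
        (Nat.choose N m : ENNReal) ≤
      μ {ω | ∀ i : Fin n, ∃ x ∈ U i ω, ∀ j : Fin n, j ≠ i → x ∉ U j ω} := by
  classical
  set F : Finset (Finset ℕ) := (Finset.Icc 1 N).powersetCard m with hF
  have hCpos : 0 < Nat.choose N m := Nat.choose_pos hmN
  set c : ENNReal := (Nat.choose N m : ENNReal) with hc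
  have hc0 : c ≠ 0 := by
    simp only [hc, ne_eq, Nat.cast_eq_zero]
    omega
  have hctop : c ≠ ⊤ := by simp [hc]
  set B : ENNReal := (Nat.choose ((n - 1) * m) m : ENNReal) with hB
  set E : Set Ω := {ω | ∀ i : Fin n, ∃ x ∈ U i ω, ∀ j : Fin n, j ≠ i → x ∉ U j ω} with hE
  set A : Fin n → Set Ω :=
    fun i => {ω | U i ω ⊆ (Finset.univ.erase i).biUnion (fun j => U j ω)} with hA
  -- complement of E is covered by the A i
  have hEc : Eᶜ ⊆ ⋃ i, A i := by
    intro ω hω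
    simp only [hE, Set.mem_compl_iff, Set.mem_setOf_eq, not_forall] at hω
    obtain ⟨i, hi⟩ := hω
    push_neg at hi
    refine Set.mem_iUnion.2 ⟨i, ?_⟩
    intro x hx
    obtain ⟨j, hj, hxj⟩ := hi x hx
    exact Finset.mem_biUnion.2 ⟨j, Finset.mem_erase.2 ⟨hj, Finset.mem_univ j⟩, hxj⟩
  -- key bound on each A i
  have key : ∀ i : Fin n, μ (A i) ≤ B / c := by
    intro i
    set D : Finset (Fin n → Finset ℕ) :=
      (Fintype.piFinset fun _ => F).filter
        (fun T => T i ⊆ (Finset.univ.erase i).biUnion T) with hD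
    -- A i is covered by the atoms indexed by D
    have hsub : A i ⊆ ⋃ T ∈ D, ⋂ j, U j ⁻¹' {T j} := by
      intro ω hω
      have hTD : (fun j => U j ω) ∈ D := by
        refine Finset.mem_filter.2 ⟨?_, hω⟩
        refine Fintype.mem_piFinset.2 fun j => ?_
        exact Finset.mem_powersetCard.2 ⟨(hrange j ω).1, (hrange j ω).2⟩
      refine Set.mem_biUnion hTD ?_
      exact Set.mem_iInter.2 fun j => rfl
    -- measure of each atom
    have hatom : ∀ T ∈ D, μ (⋂ j, U j ⁻¹' {T j}) = (1 / c) ^ n := by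
      intro T hT
      have hTF : ∀ j, T j ∈ F := Fintype.mem_piFinset.1 (Finset.mem_filter.1 hT).1
      have := hindep.measure_inter_preimage_eq_mul Finset.univ
        (sets := fun j => {T j}) (fun _ _ => trivial)
      have heq : (⋂ j, U j ⁻¹' {T j}) = ⋂ j ∈ Finset.univ, U j ⁻¹' {T j} := by
        simp
      rw [heq, this]
      have hval : ∀ j : Fin n, μ (U j ⁻¹' {T j}) = 1 / c := by
        intro j
        obtain ⟨hsub', hcard⟩ := Finset.mem_powersetCard.1 (hTF j)
        have := hunif j (T j) hsub' hcard
        simpa [Set.preimage, hc] using this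
      rw [Finset.prod_congr rfl fun j _ => hval j]
      simp [Finset.card_univ]
    -- counting D
    have hcount : D.card ≤ Nat.choose ((n - 1) * m) m * Nat.choose N m ^ (n - 1) := by
      have hmain : D.card ≤ Nat.choose ((n - 1) * m) m *
          (Fintype.piFinset fun j => if j = i then ({∅} : Finset (Finset ℕ)) else F).card := by
        apply Finset.card_le_mul_card_image_of_maps_to
          (f := fun T => Function.update T i ∅)
        · intro T hT
          refine Fintype.mem_piFinset.2 fun j => ?_
          by_cases hj : j = i
          · subst hj; simp
          · simp only [hj, if_neg hj, Function.update_of_ne hj]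
            exact Fintype.mem_piFinset.1 (Finset.mem_filter.1 hT).1 j
        · intro R hR
          set W : Finset ℕ := (Finset.univ.erase i).biUnion R with hW
          -- each fiber injects into W.powersetCard m
          have hinj : ∀ T ∈ D.filter (fun T => Function.update T i ∅ = R),
              T i ∈ W.powersetCard m := by
            intro T hT
            obtain ⟨hTD', hTR⟩ := Finset.mem_filter.1 hT
            obtain ⟨hTpi, hTsub⟩ := Finset.mem_filter.1 hTD'
            have hRj : ∀ j ≠ i, R j = T j := by
              intro j hj
              rw [← hTR, Function.update_of_ne hj]
            refine Finset.mem_powersetCard.2 ⟨?_, ?_⟩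
            · refine hTsub.trans ?_
              intro x hx
              obtain ⟨j, hjmem, hxj⟩ := Finset.mem_biUnion.1 hx
              have hji : j ≠ i := (Finset.mem_erase.1 hjmem).1
              exact Finset.mem_biUnion.2 ⟨j, hjmem, (hRj j hji) ▸ hxj⟩
            · exact (Finset.mem_powersetCard.1 (Fintype.mem_piFinset.1 hTpi i)).2
          have hfibcard : (D.filter (fun T => Function.update T i ∅ = R)).card ≤
              (W.powersetCard m).card := by
            apply Finset.card_le_card_of_injOn (fun T => T i) (fun T hT => hinj T hT)
            intro T₁ h₁ T₂ h₂ h12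
            have e₁ := (Finset.mem_filter.1 h₁).2
            have e₂ := (Finset.mem_filter.1 h₂).2
            funext j
            by_cases hj : j = i
            · subst hj; exact h12
            · have := congrFun (e₁.trans e₂.symm) j
              rwa [Function.update_of_ne hj, Function.update_of_ne hj] at this
          refine hfibcard.trans ?_
          rw [Finset.card_powersetCard]
          apply Nat.choose_le_choose
          -- |W| ≤ (n-1) * m
          calc W.card ≤ ∑ j ∈ Finset.univ.erase i, (R j).card :=
                Finset.card_biUnion_le
            _ ≤ ∑ _j ∈ Finset.univ.erase i, m := by
                apply Finset.sum_le_sum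
                intro j hj
                have hji : j ≠ i := (Finset.mem_erase.1 hj).1
                have := Fintype.mem_piFinset.1 hR j
                rw [if_neg hji] at this
                exact (Finset.mem_powersetCard.1 this).2.le
            _ = (n - 1) * m := by
                rw [Finset.sum_const, smul_eq_mul, Finset.card_erase_of_mem (Finset.mem_univ i),
                  Finset.card_univ, Fintype.card_fin]
      refine hmain.trans ?_
      apply Nat.mul_le_mul_left
      rw [Fintype.card_piFinset]
      have : ∀ j : Fin n, (if j = i then ({∅} : Finset (Finset ℕ)) else F).card =
          if j = i then 1 else Nat.choose N m := by
        intro j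
        by_cases hj : j = i <;> simp [hj, hF, Finset.card_powersetCard,
          Nat.card_Icc]
      rw [Finset.prod_congr rfl fun j _ => this j]
      rw [← Finset.mul_prod_erase Finset.univ _ (Finset.mem_univ i)]
      have hprod : ∏ j ∈ Finset.univ.erase i, (if j = i then 1 else Nat.choose N m) =
          Nat.choose N m ^ (n - 1) := by
        rw [Finset.prod_congr rfl (fun j hj => if_neg (Finset.mem_erase.1 hj).1),
          Finset.prod_const, Finset.card_erase_of_mem (Finset.mem_univ i),
          Finset.card_univ, Fintype.card_fin]
      rw [hprod]
      simp
    -- assemble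
    have h1 : μ (A i) ≤ ∑ T ∈ D, μ (⋂ j, U j ⁻¹' {T j}) :=
      (measure_mono hsub).trans (measure_biUnion_finset_le D _)
    have h2 : (∑ T ∈ D, μ (⋂ j, U j ⁻¹' {T j})) = D.card * (1 / c) ^ n := by
      rw [Finset.sum_congr rfl hatom, Finset.sum_const, nsmul_eq_mul]
    have h3 : (D.card : ENNReal) * (1 / c) ^ n ≤ (B * c ^ (n - 1)) * (1 / c) ^ n := by
      gcongr
      have : (D.card : ENNReal) ≤
          ((Nat.choose ((n - 1) * m) m * Nat.choose N m ^ (n - 1) : ℕ) : ENNReal) := by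
        exact_mod_cast hcount
      refine this.trans ?_
      rw [Nat.cast_mul, Nat.cast_pow]
    have h4 : (B * c ^ (n - 1)) * (1 / c) ^ n = B / c := by
      have hn1 : n = (n - 1) + 1 := by omega
      have hpow : (c⁻¹ : ENNReal) ^ n = c⁻¹ ^ (n - 1) * c⁻¹ := by
        rw [← pow_succ, ← hn1]
      rw [one_div, hpow, ← mul_assoc, mul_assoc B, ← mul_pow,
        ENNReal.mul_inv_cancel hc0 hctop, one_pow, mul_one, div_eq_mul_inv]
    calc μ (A i) ≤ ∑ T ∈ D, μ (⋂ j, U j ⁻¹' {T j}) := h1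
      _ = D.card * (1 / c) ^ n := h2
      _ ≤ (B * c ^ (n - 1)) * (1 / c) ^ n := h3
      _ = B / c := h4
  -- union bound
  have hEcb : μ Eᶜ ≤ (n : ENNReal) * (B / c) := by
    calc μ Eᶜ ≤ μ (⋃ i, A i) := measure_mono hEc
      _ ≤ ∑ i : Fin n, μ (A i) := by
          have : (⋃ i, A i) = ⋃ i ∈ Finset.univ, A i := by simp
          rw [this]
          exact measure_biUnion_finset_le Finset.univ A
      _ ≤ ∑ _i : Fin n, (B / c) := Finset.sum_le_sum fun i _ => key i
      _ = (n : ENNReal) * (B / c) := by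
          rw [Finset.sum_const, Finset.card_univ, Fintype.card_fin, nsmul_eq_mul]
  have hone : (1 : ENNReal) ≤ μ E + μ Eᶜ := by
    rw [← measure_univ (μ := μ), ← Set.union_compl_self E]
    exact measure_union_le _ _
  calc 1 - (n : ENNReal) * B / c ≤ 1 - μ Eᶜ := by
        rw [mul_div_assoc]
        exact tsub_le_tsub_left hEcb 1
    _ ≤ μ E := tsub_le_iff_right.2 hone
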